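/- arXiv:2511.02459 — 2 statements merged into one kernel-verified Lean document; each statement's English description precedes it below -/
import Mathlib

section
/- Every positive integer n has a unique representation as a sum of non-consecutive Fibonacci numbers F_k with k ≥ 2 (Zeckendorf's theorem). -/
open List Nat

local instance : IsTrans ℕ fun a b ↦ b + 2 ≤ a where
  trans _a _b _c hba hcb := hcb.trans <| le_self_add.trans hba

private lemma rep_pairwise {l : List ℕ} (h : l.IsZeckendorfRep) :
    (l ++ [0]).Pairwise (fun a b ↦ b + 2 ≤ a) :=
  List.isChain_iff_pairwise.1 h

private lemma rep_of_finset {s : Finset ℕ} (h2 : ∀ k ∈ s, 2 ≤ k)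
    (hc : ∀ k ∈ s, k + 1 ∉ s) :
    ((s.sort (· ≤ ·)).reverse).IsZeckendorfRep := by
  rw [List.IsZeckendorfRep, List.isChain_iff_pairwise, List.pairwise_append]
  refine ⟨?_, by simp, ?_⟩
  · have hgt : ((s.sort (· ≤ ·)).reverse).Pairwise (fun a b ↦ b < a) := by
      rw [List.pairwise_reverse]
      exact s.sortedLT_sort.pairwise
    refine hgt.imp_of_mem fun {a b} ha hb hba ↦ ?_
    have ha' : a ∈ s := by simpa using (List.mem_reverse.1 ha)
    have hb' : b ∈ s := by simpa using (List.mem_reverse.1 hb)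
    have : b + 1 ≠ a := fun h ↦ hc b hb' (h ▸ ha')
    omega
  · intro x hx y hy
    simp only [List.mem_singleton] at hy
    subst hy
    have : x ∈ s := by simpa using (List.mem_reverse.1 hx)
    simpa using h2 x this

/-- Zeckendorf's theorem: every positive integer has a unique representation as a sum of
non-consecutive Fibonacci numbers `F_k` with `k ≥ 2`. -/
theorem zeckendorf (n : ℕ) (hn : 0 < n) :
    ∃! s : Finset ℕ,
      (∀ k ∈ s, 2 ≤ k) ∧ (∀ k ∈ s, k + 1 ∉ s) ∧ ∑ k ∈ s, Nat.fib k = n := by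
  have key : ∀ s : Finset ℕ, (∀ k ∈ s, 2 ≤ k) → (∀ k ∈ s, k + 1 ∉ s) →
      (∑ k ∈ s, Nat.fib k = n) → s = (Nat.zeckendorf n).toFinset := by
    intro s h2 hc hsum
    have hrep := rep_of_finset h2 hc
    have hsum' : (((s.sort (· ≤ ·)).reverse).map Nat.fib).sum = n := by
      rw [List.map_reverse, List.sum_reverse, ← hsum]
      rw [← Finset.sum_map_toList]
      exact (List.Perm.map Nat.fib (s.sort_perm_toList (· ≤ ·))).sum_eq
    have := Nat.zeckendorf_sum_fib hrep
    rw [hsum'] at this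
    rw [this, List.toFinset_reverse, Finset.sort_toFinset]
  -- existence object
  set l := Nat.zeckendorf n with hl
  have hrep : l.IsZeckendorfRep := Nat.isZeckendorfRep_zeckendorf n
  have hpw := rep_pairwise hrep
  have hnd : l.Nodup := by
    have : (l ++ [0]).Pairwise (· ≠ ·) := hpw.imp (by omega)
    exact ((List.pairwise_append.1 this).1 : l.Nodup)
  have h2 : ∀ k ∈ l.toFinset, 2 ≤ k := by
    intro k hk
    rw [List.mem_toFinset] at hk
    have := List.pairwise_append.1 hpw
    simpa using this.2.2 k hk 0 (by simp)
  have hc : ∀ k ∈ l.toFinset, k + 1 ∉ l.toFinset := by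
    intro k hk hk1
    rw [List.mem_toFinset] at hk hk1
    have hpl : l.Pairwise (fun a b ↦ b + 2 ≤ a) := (List.pairwise_append.1 hpw).1
    have hpl' : l.Pairwise (fun a b ↦ b + 2 ≤ a ∨ a + 2 ≤ b) := hpl.imp fun h ↦ Or.inl h
    haveI : Std.Symm (fun a b : ℕ ↦ b + 2 ≤ a ∨ a + 2 ≤ b) := ⟨fun a b h ↦ h.symm⟩
    have := hpl'.forall hk hk1 (by omega)
    omega
  refine ⟨l.toFinset, ⟨h2, hc, ?_⟩, fun s hs ↦ key s hs.1 hs.2.1 hs.2.2⟩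
  rw [List.sum_toFinset _ hnd, Nat.sum_zeckendorf_fib]
end

section
/- For d ≥ 3 and any integer p ≥ 1, the matrix E_{kℓ}(p) (identity plus p in off-diagonal position (k,ℓ)) can be written as a product of at most 27·⌈log₂(p+1)⌉ elementary transvection matrices E_{ij}(±1). -/
open Matrix

namespace Riley

variable {d : ℕ}

/-- the basic two-entry matrix -/
def P (k l m : Fin d) (x y : ℤ) : Matrix (Fin d) (Fin d) ℤ :=
  1 + single k l x + single m l y

lemma P_zero (k l m : Fin d) : P k l m 0 0 = 1 := by
  simp [P]

lemma conj_S (k l m : Fin d) (hmk : m ≠ k) (hlk : l ≠ k) (a x y : ℤ) :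
    (1 + single k m a) * P k l m x y * (1 + single k m (-a)) =
      P k l m (x + a*y) y := by
  have e1 : single k m a * single k l x = 0 :=
    single_mul_single_of_ne a k m _ hmk x
  have e2 : single k m a * single m l y = single k l (a*y) :=
    single_mul_single_same a k m l y
  have e3 : single k l x * single k m (-a) = 0 :=
    single_mul_single_of_ne x k l _ hlk (-a)
  have e4 : single m l y * single k m (-a) = 0 :=
    single_mul_single_of_ne y m l _ hlk (-a)
  have e5 : single k m a * single k m (-a) = 0 :=
    single_mul_single_of_ne a k m _ hmk (-a)
  have e6 : single k l (a*y) * single k m (-a) = 0 :=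
    single_mul_single_of_ne (a*y) k l _ hlk (-a)
  have e7 : single k m a + single k m (-a) = 0 := by
    rw [← single_add]; simp
  unfold P
  rw [single_add k l x (a*y)]
  simp only [add_mul, mul_add, one_mul, mul_one, e1, e2, e3, e4, e5, e6, add_zero, zero_add]
  rw [← sub_eq_zero]
  rw [show (1 : Matrix (Fin d) (Fin d) ℤ) + single k m a + single k l x +
        (single m l y + single k l (a * y)) + single k m (-a) -
      (1 + (single k l x + single k l (a * y)) + single m l y) =
      single k m a + single k m (-a) from by abel, e7]

end Riley

namespace Riley2
open Riley
variable {d : ℕ}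

lemma conj_T (k l m : Fin d) (hkm : k ≠ m) (hlm : l ≠ m) (a x y : ℤ) :
    (1 + single m k a) * P k l m x y * (1 + single m k (-a)) =
      P k l m x (y + a*x) := by
  have e1 : single m k a * single k l x = single m l (a*x) :=
    single_mul_single_same a m k l x
  have e2 : single m k a * single m l y = 0 :=
    single_mul_single_of_ne a m k _ hkm y
  have e3 : single k l x * single m k (-a) = 0 :=
    single_mul_single_of_ne x k l _ hlm (-a)
  have e4 : single m l y * single m k (-a) = 0 :=
    single_mul_single_of_ne y m l _ hlm (-a)
  have e5 : single m k a * single m k (-a) = 0 :=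
    single_mul_single_of_ne a m k _ hkm (-a)
  have e6 : single m l (a*x) * single m k (-a) = 0 :=
    single_mul_single_of_ne (a*x) m l _ hlm (-a)
  have e7 : single m k a + single m k (-a) = 0 := by
    rw [← single_add]; simp
  unfold P
  rw [single_add m l y (a*x)]
  simp only [add_mul, mul_add, one_mul, mul_one, e1, e2, e3, e4, e5, e6, add_zero, zero_add]
  rw [← sub_eq_zero]
  rw [show (1 : Matrix (Fin d) (Fin d) ℤ) + single m k a +
        (single k l x + single m l (a * x)) + single m l y +
        single m k (-a) -
      (1 + single k l x + (single m l y + single m l (a * x))) =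
      single m k a + single m k (-a) from by abel, e7]

lemma mul_addx (k l m : Fin d) (hlk : l ≠ k) (ε x y : ℤ) :
    P k l m x y * (1 + single k l ε) = P k l m (x + ε) y := by
  have e3 : single k l x * single k l ε = 0 :=
    single_mul_single_of_ne x k l _ hlk ε
  have e4 : single m l y * single k l ε = 0 :=
    single_mul_single_of_ne y m l _ hlk ε
  unfold P
  rw [single_add k l x ε]
  simp only [add_mul, mul_add, one_mul, mul_one, e3, e4, add_zero, zero_add]
  abel

lemma mul_addy (k l m : Fin d) (hlk : l ≠ k) (hlm : l ≠ m) (ε x y : ℤ) :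
    P k l m x y * (1 + single m l ε) = P k l m x (y + ε) := by
  have e3 : single k l x * single m l ε = 0 :=
    single_mul_single_of_ne x k l _ hlm ε
  have e4 : single m l y * single m l ε = 0 :=
    single_mul_single_of_ne y m l _ hlm ε
  unfold P
  rw [single_add m l y ε]
  simp only [add_mul, mul_add, one_mul, mul_one, e3, e4, add_zero, zero_add]
  abel

end Riley2

namespace Riley3
open Riley Riley2
variable {d : ℕ}

def IsElem (M : Matrix (Fin d) (Fin d) ℤ) : Prop :=
  ∃ i j : Fin d, ∃ ε : ℤ, i ≠ j ∧ (ε = 1 ∨ ε = -1) ∧ M = 1 + single i j ε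

def Rep (k l m : Fin d) (n : ℕ) (x y : ℤ) : Prop :=
  ∃ L : List (Matrix (Fin d) (Fin d) ℤ), L.length ≤ n ∧ (∀ M ∈ L, IsElem M) ∧
    L.prod = P k l m x y

variable {k l m : Fin d}

lemma rep_zero : Rep k l m 0 0 0 :=
  ⟨[], by simp, by simp, by simp [P_zero]⟩

lemma rep_mono {n n' x y} (h : n ≤ n') (hr : Rep k l m n x y) : Rep k l m n' x y := by
  obtain ⟨L, h1, h2, h3⟩ := hr; exact ⟨L, h1.trans h, h2, h3⟩

lemma rep_addx (hkl : k ≠ l) {n x y} (ε : ℤ) (hε : ε = 1 ∨ ε = -1)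
    (hr : Rep k l m n x y) : Rep k l m (n+1) (x + ε) y := by
  obtain ⟨L, h1, h2, h3⟩ := hr
  refine ⟨L ++ [1 + single k l ε], by simp; omega, ?_, ?_⟩
  · intro M hM
    rcases List.mem_append.1 hM with h | h
    · exact h2 M h
    · simp at h; exact ⟨k, l, ε, hkl, hε, h⟩
  · rw [List.prod_append, List.prod_singleton, h3, mul_addx k l m (Ne.symm hkl)]

lemma rep_addy (hkl : k ≠ l) (hml : m ≠ l) {n x y} (ε : ℤ) (hε : ε = 1 ∨ ε = -1)
    (hr : Rep k l m n x y) : Rep k l m (n+1) x (y + ε) := by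
  obtain ⟨L, h1, h2, h3⟩ := hr
  refine ⟨L ++ [1 + single m l ε], by simp; omega, ?_, ?_⟩
  · intro M hM
    rcases List.mem_append.1 hM with h | h
    · exact h2 M h
    · simp at h; exact ⟨m, l, ε, hml, hε, h⟩
  · rw [List.prod_append, List.prod_singleton, h3,
      mul_addy k l m (Ne.symm hkl) (Ne.symm hml)]

lemma rep_conjS (hkm : k ≠ m) (hlk : l ≠ k) {n x y} (a : ℤ) (ha : a = 1 ∨ a = -1)
    (hr : Rep k l m n x y) : Rep k l m (n+2) (x + a*y) y := by
  obtain ⟨L, h1, h2, h3⟩ := hr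
  refine ⟨(1 + single k m a) :: (L ++ [1 + single k m (-a)]),
    by simp; omega, ?_, ?_⟩
  · intro M hM
    rcases List.mem_cons.1 hM with h | h
    · exact ⟨k, m, a, hkm, ha, h⟩
    · rcases List.mem_append.1 h with h' | h'
      · exact h2 M h'
      · simp at h'
        refine ⟨k, m, -a, hkm, by rcases ha with h | h <;> simp [h], h'⟩
  · rw [List.prod_cons, List.prod_append, List.prod_singleton, h3, ← mul_assoc,
      conj_S k l m (Ne.symm hkm) hlk]

lemma rep_conjT (hkm : k ≠ m) (hlk : l ≠ k) (hlm : l ≠ m) {n x y} (a : ℤ)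
    (ha : a = 1 ∨ a = -1) (hr : Rep k l m n x y) : Rep k l m (n+2) x (y + a*x) := by
  obtain ⟨L, h1, h2, h3⟩ := hr
  refine ⟨(1 + single m k a) :: (L ++ [1 + single m k (-a)]),
    by simp; omega, ?_, ?_⟩
  · intro M hM
    rcases List.mem_cons.1 hM with h | h
    · exact ⟨m, k, a, Ne.symm hkm, ha, h⟩
    · rcases List.mem_append.1 h with h' | h'
      · exact h2 M h'
      · simp at h'
        refine ⟨m, k, -a, Ne.symm hkm, by rcases ha with h | h <;> simp [h], h'⟩
  · rw [List.prod_cons, List.prod_append, List.prod_singleton, h3, ← mul_assoc,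
      conj_T k l m hkm hlm]

/-- trivial construction by unit additions -/
lemma rep_trivial (hkl : k ≠ l) (hml : m ≠ l) : ∀ a b : ℕ, Rep k l m (a + b) (a : ℤ) (b : ℤ) := by
  have hx : ∀ a : ℕ, Rep k l m a (a : ℤ) 0 := by
    intro a
    induction a with
    | zero => exact rep_zero
    | succ n ih =>
      have h := rep_addx (m := m) hkl 1 (Or.inl rfl) ih
      have e : ((n:ℤ) + 1) = ((n+1 : ℕ) : ℤ) := by push_cast; ring
      rw [e] at h
      exact h
  intro a b
  induction b with
  | zero => simpa using hx a
  | succ n ih =>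
    have h := rep_addy hkl hml 1 (Or.inl rfl) ih
    have e : ((n:ℤ) + 1) = ((n+1 : ℕ) : ℤ) := by push_cast; ring
    rw [e] at h
    exact h

end Riley3

namespace RileyReal

noncomputable def phi : ℝ := (1 + Real.sqrt 5) / 2

lemma phi_sq : phi ^ 2 = phi + 1 := by
  have h5 : Real.sqrt 5 ^ 2 = 5 := Real.sq_sqrt (by norm_num)
  unfold phi
  nlinarith [h5]

lemma phi_lb : (1.61 : ℝ) ≤ phi := by
  have : (2.22 : ℝ) ≤ Real.sqrt 5 := by
    rw [show (2.22:ℝ) = Real.sqrt (2.22^2) from (Real.sqrt_sq (by norm_num)).symm]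
    exact Real.sqrt_le_sqrt (by norm_num)
  unfold phi; linarith

lemma phi_ub : phi ≤ (1.62 : ℝ) := by
  have : Real.sqrt 5 ≤ 2.24 := by
    rw [show (2.24:ℝ) = Real.sqrt (2.24^2) from (Real.sqrt_sq (by norm_num)).symm]
    exact Real.sqrt_le_sqrt (by norm_num)
  unfold phi; linarith

lemma fib_phi : ∀ n : ℕ, (Nat.fib (n+1) : ℝ) - phi * (Nat.fib n) = (1 - phi)^n := by
  intro n
  induction n with
  | zero => simp
  | succ n ih =>
    rw [Nat.fib_add_two]
    push_cast
    have h := phi_sq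
    linear_combination (1 - phi) * ih - (Nat.fib n : ℝ) * h

lemma fib_le_two_pow : ∀ n : ℕ, Nat.fib (n+1) ≤ 2 ^ n := by
  have h : ∀ n : ℕ, Nat.fib (n+1) ≤ 2^n ∧ Nat.fib (n+2) ≤ 2^(n+1) := by
    intro n
    induction n with
    | zero => simp [Nat.fib]
    | succ n ih =>
      refine ⟨ih.2, ?_⟩
      rw [Nat.fib_add_two]
      calc Nat.fib (n+1) + Nat.fib (n+2) ≤ 2^n + 2^(n+1) := Nat.add_le_add ih.1 ih.2
        _ ≤ 2^(n+2) := by rw [pow_succ, pow_succ]; omega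
  exact fun n => (h n).1

end RileyReal

namespace RileyMain
open Riley Riley2 Riley3 RileyReal

variable {d : ℕ} {k l m : Fin d}

lemma rep_addx' (hkl : k ≠ l) {n x y} (c : ℤ) (hc : c = 1 ∨ c = -1 ∨ c = 0)
    (hr : Rep k l m n x y) : Rep k l m (n+1) (x + c) y := by
  rcases hc with h | h | h
  · exact rep_addx hkl c (Or.inl h) hr
  · exact rep_addx hkl c (Or.inr h) hr
  · subst h; rw [add_zero]; exact rep_mono (by omega) hr

lemma rep_addy' (hkl : k ≠ l) (hml : m ≠ l) {n x y} (c : ℤ)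
    (hc : c = 1 ∨ c = -1 ∨ c = 0) (hr : Rep k l m n x y) : Rep k l m (n+1) x (y + c) := by
  rcases hc with h | h | h
  · exact rep_addy hkl hml c (Or.inl h) hr
  · exact rep_addy hkl hml c (Or.inr h) hr
  · subst h; rw [add_zero]; exact rep_mono (by omega) hr

lemma step (hkl : k ≠ l) (hkm : k ≠ m) (hml : m ≠ l) {X Y : ℤ} (c : ℤ)
    (hc : c = 1 ∨ c = -1 ∨ c = 0) {n : ℕ}
    (h : Rep k l m n (X - Y - c) (2*Y - X)) : Rep k l m (n+6) X Y := by
  have s1 := rep_conjT hkm (Ne.symm hkl) (Ne.symm hml) 1 (Or.inl rfl) h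
  rw [one_mul] at s1
  have s2 := rep_addy' hkl hml c hc s1
  have s3 := rep_conjS hkm (Ne.symm hkl) 1 (Or.inl rfl) s2
  rw [one_mul] at s3
  have s4 := rep_addx' hkl c hc s3
  have e1 : X - Y - c + (2*Y - X + (X - Y - c) + c) + c = X := by ring
  have e2 : 2*Y - X + (X - Y - c) + c = Y := by ring
  rw [e2] at s4
  have e3 : X - Y - c + Y + c = X := by ring
  rw [e3] at s4
  exact rep_mono (by omega) s4

lemma inner (hkl : k ≠ l) (hkm : k ≠ m) (hml : m ≠ l) :
    ∀ (n : ℕ) (X Y : ℤ), X.toNat ≤ n → 1 ≤ Y →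
      |(X:ℝ) - phi * Y| ≤ 1/2 → Rep k l m (6 * Nat.clog 2 (X.toNat + 1)) X Y := by
  intro n
  induction n with
  | zero =>
    intro X Y hn hY hinv
    rw [abs_le] at hinv
    have hYr : (1:ℝ) ≤ (Y:ℤ) := by exact_mod_cast hY
    have hX1 : (1:ℝ) < (X:ℤ) := by nlinarith [phi_lb, phi_ub, hinv.1, hinv.2]
    have : (1:ℤ) < X := by exact_mod_cast hX1
    omega
  | succ n ih =>
    intro X Y hn hY hinv
    rw [abs_le] at hinv
    obtain ⟨hD1, hD2⟩ := hinv
    have hYr : (1:ℝ) ≤ (Y:ℤ) := by exact_mod_cast hY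
    have hX1 : (1:ℝ) < (X:ℤ) := by nlinarith [phi_lb, phi_ub]
    have hX2 : (2:ℤ) ≤ X := by
      have : (1:ℤ) < X := by exact_mod_cast hX1
      omega
    by_cases hsmall : X ≤ 16
    · -- base case: trivial construction
      have hYb : (161:ℤ)*Y ≤ 100*X + 50 := by
        have hr : (161:ℝ)*(Y:ℤ) ≤ 100*(X:ℤ) + 50 := by
          nlinarith [phi_lb, mul_nonneg (by nlinarith [phi_lb] : (0:ℝ) ≤ phi - 1.61)
            (by linarith : (0:ℝ) ≤ (Y:ℤ))]
        exact_mod_cast hr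
      have hX0 : 0 ≤ X := by omega
      have hY0 : 0 ≤ Y := by omega
      have htriv := rep_trivial (k := k) (l := l) (m := m) hkl hml X.toNat Y.toNat
      rw [Int.toNat_of_nonneg hX0, Int.toNat_of_nonneg hY0] at htriv
      refine rep_mono ?_ htriv
      have hcl : ∀ t u : ℕ, 2^t < u + 1 → t < Nat.clog 2 (u+1) :=
        fun t u h => (Nat.lt_clog_iff_pow_lt (by norm_num)).2 h
      set a := X.toNat with ha
      set b := Y.toNat with hb
      have haX : (a:ℤ) = X := Int.toNat_of_nonneg hX0
      have hbY : (b:ℤ) = Y := Int.toNat_of_nonneg hY0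
      have hab : (161:ℤ)*b ≤ 100*a + 50 := by rw [haX, hbY]; exact hYb
      have ha16 : a ≤ 16 := by omega
      have ha2 : 2 ≤ a := by omega
      rcases le_or_gt 16 a with h16 | h16
      · have := hcl 4 a (by omega); omega
      rcases le_or_gt 8 a with h8 | h8
      · have := hcl 3 a (by omega); omega
      rcases le_or_gt 4 a with h4 | h4
      · have := hcl 2 a (by omega); omega
      · have := hcl 1 a (by omega); omega
    · -- main step
      push_neg at hsmall
      have hXr : (17:ℝ) ≤ (X:ℤ) := by exact_mod_cast hsmall
      have hp2ub : phi^2 ≤ 2.63 := by nlinarith [phi_ub, phi_lb]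
      have hp2lb : (2.59:ℝ) ≤ phi^2 := by nlinarith [phi_ub, phi_lb]
      -- choose the steering digit c
      obtain ⟨c, hcor, habs⟩ : ∃ c : ℤ, (c = 1 ∨ c = -1 ∨ c = 0) ∧
          -(1/2) ≤ phi^2*((X:ℝ) - phi*Y) - c ∧ phi^2*((X:ℝ) - phi*Y) - c ≤ 1/2 := by
        by_cases hc1 : (1:ℝ)/2 ≤ phi^2*((X:ℝ) - phi*Y)
        · refine ⟨1, Or.inl rfl, ?_, ?_⟩
          · push_cast; linarith
          · push_cast
            have h1 := mul_le_mul_of_nonneg_left hD2 (by positivity : (0:ℝ) ≤ phi^2)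
            linarith
        · by_cases hc2 : phi^2*((X:ℝ) - phi*Y) ≤ -(1/2)
          · refine ⟨-1, Or.inr (Or.inl rfl), ?_, ?_⟩
            · push_cast
              have h1 := mul_le_mul_of_nonneg_left hD1 (by positivity : (0:ℝ) ≤ phi^2)
              linarith
            · push_cast; linarith
          · push_neg at hc1 hc2
            refine ⟨0, Or.inr (Or.inr rfl), ?_, ?_⟩
            · push_cast; linarith
            · push_cast; linarith
      have hcle : c ≤ 1 ∧ -1 ≤ c := by rcases hcor with h | h | h <;> simp [h]
      -- key geometric facts
      have hYbigr : (3:ℝ) ≤ 2*(Y:ℤ) - (X:ℤ) := by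
        nlinarith [mul_nonneg (by nlinarith [phi_ub] : (0:ℝ) ≤ 1.62 - phi)
          (by linarith : (0:ℝ) ≤ (Y:ℤ))]
      have hYbig : (3:ℤ) ≤ 2*Y - X := by exact_mod_cast hYbigr
      have hX'r : (2:ℝ) ≤ (X:ℤ) - (Y:ℤ) - (c:ℤ) := by
        have hcr : ((c:ℤ):ℝ) ≤ 1 := by exact_mod_cast hcle.1
        nlinarith [mul_nonneg (by nlinarith [phi_lb] : (0:ℝ) ≤ phi - 1.61)
          (by linarith : (0:ℝ) ≤ (Y:ℤ))]
      have hX' : (2:ℤ) ≤ X - Y - c := by exact_mod_cast hX'r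
      have hhalf : 2*(X - Y - c) + 1 ≤ X := by omega
      -- invariant for the smaller pair
      have hinv' : |((X - Y - c : ℤ):ℝ) - phi * ((2*Y - X : ℤ):ℝ)| ≤ 1/2 := by
        have key : ((X - Y - c : ℤ):ℝ) - phi*((2*Y - X : ℤ):ℝ)
            = phi^2*((X:ℝ) - phi*Y) - c := by
          push_cast
          linear_combination (phi*(Y:ℝ) + (Y:ℝ) - (X:ℝ)) * phi_sq
        rw [key, abs_le]; exact habs
      have hY'1 : (1:ℤ) ≤ 2*Y - X := by omega
      have hn' : (X - Y - c).toNat ≤ n := by omega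
      have hrec := ih (X - Y - c) (2*Y - X) hn' hY'1 hinv'
      have hstep := step hkl hkm hml c hcor hrec
      refine rep_mono ?_ hstep
      -- clog accounting
      set a' := (X - Y - c).toNat with ha'
      have ha'1 : 1 ≤ a' := by omega
      set t := Nat.clog 2 (a' + 1) with ht
      have ht1 : 1 ≤ t := Nat.clog_pos (by norm_num) (by omega)
      have hpred : 2^(t-1) < a' + 1 :=
        Nat.pow_pred_clog_lt_self (by norm_num) (by omega)
      have hpow : 2^t ≤ 2*a' := by
        rw [show t = (t-1)+1 by omega, pow_succ]
        omega
      have h2a : 2*a' + 1 ≤ X.toNat := by omega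
      have hlt : t < Nat.clog 2 (X.toNat + 1) :=
        (Nat.lt_clog_iff_pow_lt (by norm_num)).2 (by omega)
      omega

end RileyMain

namespace RileyFinal
open Riley Riley2 Riley3 RileyReal RileyMain

variable {d : ℕ} {k l m : Fin d}

lemma outer (hkl : k ≠ l) (hkm : k ≠ m) (hml : m ≠ l) (p : ℤ) :
    ∀ (r : ℕ) (n : ℕ), Rep k l m n (p * Nat.fib (2*r+1)) (p * Nat.fib (2*r)) →
      Rep k l m (n + 4*r) p 0 := by
  intro r
  induction r with
  | zero => intro n h; simpa using h
  | succ r ih =>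
    intro n h
    have e23 : 2*(r+1)+1 = (2*r+1)+2 := by ring
    have e22 : 2*(r+1) = 2*r+2 := by ring
    rw [e23, e22] at h
    have s1 := rep_conjS hkm (Ne.symm hkl) (-1) (Or.inr rfl) h
    have ex : p * (Nat.fib ((2*r+1)+2) : ℤ) + (-1) * (p * (Nat.fib (2*r+2) : ℤ))
        = p * Nat.fib (2*r+1) := by
      rw [Nat.fib_add_two]
      push_cast
      ring_nf
    rw [ex] at s1
    have s2 := rep_conjT hkm (Ne.symm hkl) (Ne.symm hml) (-1) (Or.inr rfl) s1
    have ey : p * (Nat.fib (2*r+2) : ℤ) + (-1) * (p * (Nat.fib (2*r+1) : ℤ))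
        = p * Nat.fib (2*r) := by
      rw [show 2*r+2 = (2*r)+2 by ring, Nat.fib_add_two]
      push_cast
      ring
    rw [ey] at s2
    have := ih (n + 2 + 2) s2
    exact rep_mono (by omega) this

lemma key (hkl : k ≠ l) (hkm : k ≠ m) (hml : m ≠ l) (p : ℤ) (hp : 1 ≤ p) :
    Rep k l m (27 * Nat.clog 2 (p.toNat + 1)) p 0 := by
  have hc1 : 1 ≤ Nat.clog 2 (p.toNat + 1) := Nat.clog_pos (by norm_num) (by omega)
  set c := Nat.clog 2 (p.toNat + 1) with hcdef
  by_cases hps : p ≤ 16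
  · have htriv := rep_trivial (k := k) (l := l) (m := m) hkl hml p.toNat 0
    rw [Int.toNat_of_nonneg (by omega : (0:ℤ) ≤ p)] at htriv
    push_cast at htriv
    exact rep_mono (by omega) htriv
  · push_neg at hps
    have hc4 : 4 ≤ c := by
      have := (Nat.lt_clog_iff_pow_lt (by norm_num : 1 < 2)).2
        (show 2^3 < p.toNat + 1 by omega)
      omega
    set r := c + 1 with hrdef
    set F1 := Nat.fib (2*r+1) with hF1
    set F0 := Nat.fib (2*r) with hF0
    have hf0pos : 1 ≤ F0 := Nat.fib_pos.2 (by omega)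
    have hf1pos : 1 ≤ F1 := Nat.fib_pos.2 (by omega)
    have hY1 : (1:ℤ) ≤ p * F0 := by
      have h1 : (1:ℤ) ≤ (F0:ℤ) := by exact_mod_cast hf0pos
      nlinarith
    -- entry invariant
    have hq : ((1-phi)^2) * phi^2 = 1 := by
      linear_combination (phi^2 - phi + 1) * phi_sq
    have hphi2 : (2:ℝ) ≤ phi^2 := by nlinarith [phi_lb]
    have hq0 : (0:ℝ) ≤ (1-phi)^2 := sq_nonneg _
    have hq2 : (1-phi)^2 ≤ 1/2 := by nlinarith [hq, hphi2, hq0]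
    have hqr : ((1-phi)^2)^r ≤ (1/2)^r := pow_le_pow_left₀ hq0 hq2 r
    have hple' : p + 1 ≤ (2:ℤ)^c := by
      have h := Nat.le_pow_clog (by norm_num : 1 < 2) (p.toNat + 1)
      have h' : ((p.toNat + 1 : ℕ) : ℤ) ≤ ((2^c : ℕ) : ℤ) := by exact_mod_cast h
      push_cast at h'
      rw [Int.toNat_of_nonneg (by omega : (0:ℤ) ≤ p)] at h'
      exact h'
    have hple : (p:ℝ) ≤ 2^c := by
      have h1 : p ≤ (2:ℤ)^c := by linarith
      exact_mod_cast h1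
    have hfp := fib_phi (2*r)
    have hXY : ((p * (F1:ℤ) : ℤ):ℝ) - phi*((p * (F0:ℤ) : ℤ):ℝ)
        = (p:ℝ)*((1-phi)^(2*r)) := by
      push_cast
      linear_combination (p:ℝ) * hfp
    have hinv : |((p * (F1:ℤ) : ℤ):ℝ) - phi * ((p * (F0:ℤ) : ℤ):ℝ)| ≤ 1/2 := by
      rw [hXY, pow_mul]
      have hpr : (0:ℝ) < (p:ℝ) := by
        have : (0:ℤ) < p := by omega
        exact_mod_cast this
      rw [abs_of_nonneg (by positivity)]
      have hb : (p:ℝ)*(((1-phi)^2)^r) ≤ (2^c:ℝ)*(1/2)^r :=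
        mul_le_mul hple hqr (by positivity) (by positivity)
      have he : ((2:ℝ)^c)*(1/2)^r = 1/2 := by
        rw [hrdef, div_pow, one_pow, pow_succ]
        field_simp
      linarith [hb, he.le]
    -- apply inner + outer
    have hin := inner hkl hkm hml (p * (F1:ℤ)).toNat (p * (F1:ℤ)) (p * (F0:ℤ))
      le_rfl hY1 hinv
    have hout := outer hkl hkm hml p r _ hin
    refine rep_mono ?_ hout
    -- counting
    have hXt : (p * (F1:ℤ)).toNat = p.toNat * F1 := by
      rw [show p * (F1:ℤ) = ((p.toNat * F1 : ℕ) : ℤ) by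
        push_cast
        rw [Int.toNat_of_nonneg (by omega : (0:ℤ) ≤ p)]]
      exact Int.toNat_natCast _
    rw [hXt]
    have hfb : F1 ≤ 2^(2*r) := fib_le_two_pow (2*r)
    have hpt : p.toNat + 1 ≤ 2^c := Nat.le_pow_clog (by norm_num) _
    have hepow : 2^(3*c+2) = 2^c * 2^(2*r) := by
      rw [← pow_add]
      congr 1
      omega
    have hclog : Nat.clog 2 (p.toNat * F1 + 1) ≤ 3*c + 2 := by
      apply (Nat.clog_le_iff_le_pow (by norm_num : 1 < 2)).2
      have hs1 : p.toNat * F1 ≤ p.toNat * 2^(2*r) := Nat.mul_le_mul_left _ hfb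
      have hs2 : p.toNat * 2^(2*r) < 2^c * 2^(2*r) :=
        mul_lt_mul_of_pos_right (by omega) (by positivity)
      rw [hepow]
      omega
    omega

end RileyFinal

/-- Riley's lemma: for `d ≥ 3` and `p ≥ 1`, the matrix `E_{kℓ}(p)` is a product of at
most `27·⌈log₂(p+1)⌉` elementary transvections `E_{ij}(±1)`. -/
theorem transvection_power_decomposition (d : ℕ) (hd : 3 ≤ d)
    (k l : Fin d) (hkl : k ≠ l) (p : ℤ) (hp : 1 ≤ p) :
    ∃ L : List (Matrix (Fin d) (Fin d) ℤ),
      L.length ≤ 27 * Nat.clog 2 (p.toNat + 1) ∧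
      (∀ M ∈ L, ∃ i j : Fin d, ∃ ε : ℤ, i ≠ j ∧ (ε = 1 ∨ ε = -1) ∧
        M = 1 + Matrix.single i j ε) ∧
      L.prod = 1 + Matrix.single k l p := by
  obtain ⟨m, hm⟩ : ∃ m : Fin d, m ∉ ({k, l} : Finset (Fin d)) := by
    by_contra h
    push_neg at h
    have hsub : (Finset.univ : Finset (Fin d)) ⊆ {k, l} := fun x _ => h x
    have hcard := Finset.card_le_card hsub
    have h2 : ({k, l} : Finset (Fin d)).card ≤ 2 :=
      (Finset.card_insert_le k {l}).trans (by simp)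
    simp [Finset.card_univ] at hcard
    omega
  simp only [Finset.mem_insert, Finset.mem_singleton, not_or] at hm
  obtain ⟨hmk, hml⟩ := hm
  obtain ⟨L, h1, h2, h3⟩ :=
    RileyFinal.key (k := k) (l := l) (m := m) hkl (Ne.symm hmk) hml p hp
  refine ⟨L, h1, h2, ?_⟩
  rw [h3]
  simp [Riley.P]
end
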